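/- The seminorm |||h|||_q² = (1/ℓ(q))∫₀^{ℓ(q)} |∂_s h|² ds − ((1/ℓ(q))∫₀^{ℓ(q)} ∂_s hᵀ T ds)² − ((1/ℓ(q))∫₀^{ℓ(q)} ∂_s hᵀ N ds)² vanishes on infinitesimal similarity transformations: if h(s) = μ q(s) + A q(s) + b with μ ∈ ℝ, A skew-symmetric and b ∈ ℝ², then |||h|||_q = 0. -/

import Mathlib

open scoped RealInnerProductSpace

/-- the scale/rotation-invariant seminorm
`|||h|||_q² = (1/ℓ)∫|∂ₛh|² − ((1/ℓ)∫∂ₛhᵀT)² − ((1/ℓ)∫∂ₛhᵀN)²` vanishes on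
infinitesimal similarity transformations `h = μ q + A q + b` with `A` skew. -/
theorem stmt_5 (ℓ : ℝ) (hℓ : 0 < ℓ)
    (q T N : ℝ → EuclideanSpace ℝ (Fin 2))
    (hq : ∀ s, HasDerivAt q (T s) s)
    (hT : ∀ s, ‖T s‖ = 1)
    (hN : ∀ s, N s 0 = -(T s 1) ∧ N s 1 = T s 0)
    (hclosed : q 0 = q ℓ)
    (hinjOn : Set.InjOn q (Set.Ico 0 ℓ))
    (h dh : ℝ → EuclideanSpace ℝ (Fin 2))
    (hder : ∀ s, HasDerivAt h (dh s) s)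
    (μ : ℝ) (A : (EuclideanSpace ℝ (Fin 2)) →ₗ[ℝ] (EuclideanSpace ℝ (Fin 2))) (b : EuclideanSpace ℝ (Fin 2))
    (hskew : ∀ u w : EuclideanSpace ℝ (Fin 2), ⟪A u, w⟫ = -⟪u, A w⟫)
    (hform : ∀ s, h s = μ • q s + A (q s) + b) :
    (1 / ℓ) * (∫ s in (0:ℝ)..ℓ, ‖dh s‖ ^ 2)
      - ((1 / ℓ) * ∫ s in (0:ℝ)..ℓ, ⟪dh s, T s⟫) ^ 2
      - ((1 / ℓ) * ∫ s in (0:ℝ)..ℓ, ⟪dh s, N s⟫) ^ 2 = 0 := by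
  have inner2 : ∀ x y : EuclideanSpace ℝ (Fin 2), ⟪x, y⟫ = x 0 * y 0 + x 1 * y 1 := by
    intro x y
    simp [PiLp.inner_apply, Fin.sum_univ_two, RCLike.inner_apply, mul_comm]
  set e0 : EuclideanSpace ℝ (Fin 2) := EuclideanSpace.single 0 1 with he0
  set e1 : EuclideanSpace ℝ (Fin 2) := EuclideanSpace.single 1 1 with he1
  set a : ℝ := A e0 1 with ha
  -- skew-symmetry facts
  have h00 : A e0 0 = 0 := by
    have := hskew e0 e0
    rw [inner2, inner2] at this
    simp [he0, EuclideanSpace.single_apply] at this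
    linarith
  have h11 : A e1 1 = 0 := by
    have := hskew e1 e1
    rw [inner2, inner2] at this
    simp [he1, EuclideanSpace.single_apply] at this
    linarith
  have h10 : A e1 0 = -a := by
    have := hskew e0 e1
    rw [inner2, inner2] at this
    simp [he0, he1, EuclideanSpace.single_apply] at this
    linarith
  have hAu : ∀ u : EuclideanSpace ℝ (Fin 2), A u 0 = -a * u 1 ∧ A u 1 = a * u 0 := by
    intro u
    have hu : u = u 0 • e0 + u 1 • e1 := by
      ext i
      fin_cases i <;> simp [he0, he1, EuclideanSpace.single_apply]
    constructor
    · conv_lhs => rw [hu]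
      simp [map_add, map_smul, h00, h10]
      ring
    · conv_lhs => rw [hu]
      simp [map_add, map_smul, h11, ha]
      ring
  -- derivative of h
  set A' : EuclideanSpace ℝ (Fin 2) →L[ℝ] EuclideanSpace ℝ (Fin 2) :=
    LinearMap.toContinuousLinearMap A with hA'
  have hdh : ∀ s, dh s = μ • T s + A (T s) := by
    intro s
    have hfun : h = fun s => μ • q s + A (q s) + b := funext hform
    have hg : HasDerivAt (fun s => μ • q s + A' (q s) + b) (μ • T s + A' (T s)) s := by
      exact (((hq s).const_smul μ).add (A'.hasFDerivAt.comp_hasDerivAt s (hq s))).add_const b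
    have hg' : HasDerivAt h (μ • T s + A (T s)) s := by
      rw [hfun]
      exact hg
    exact (hder s).unique hg'
  have hTnorm : ∀ s, T s 0 ^ 2 + T s 1 ^ 2 = 1 := by
    intro s
    have := real_inner_self_eq_norm_sq (T s)
    rw [inner2, hT s] at this
    nlinarith [this]
  have key1 : ∀ s, ⟪dh s, T s⟫ = μ := by
    intro s
    rw [hdh s, inner2]
    have hA := hAu (T s)
    simp [hA.1, hA.2]
    linear_combination μ * hTnorm s
  have key2 : ∀ s, ⟪dh s, N s⟫ = a := by
    intro s
    rw [hdh s, inner2]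
    have hA := hAu (T s)
    have hNs := hN s
    simp [hA.1, hA.2, hNs.1, hNs.2]
    linear_combination a * hTnorm s
  have key3 : ∀ s, ‖dh s‖ ^ 2 = μ ^ 2 + a ^ 2 := by
    intro s
    rw [← real_inner_self_eq_norm_sq, hdh s, inner2]
    have hA := hAu (T s)
    simp [hA.1, hA.2]
    linear_combination (μ ^ 2 + a ^ 2) * hTnorm s
  simp_rw [key1, key2, key3]
  rw [intervalIntegral.integral_const, intervalIntegral.integral_const, intervalIntegral.integral_const]
  simp only [smul_eq_mul, sub_zero]
  field_simp
  ring
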